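/- arXiv:2404.17939 — 2 statements merged into one kernel-verified Lean document; each statement's English description precedes it below -/
import Mathlib

section
/- (Policy gradient representation, deterministic-grid case of the paper's main theorem.) The map θ ↦ J^θ_0(s₀,a₀) is differentiable on ℝ, and for every θ ∈ ℝ its derivative equals E^θ[ Σ_{k=0}^{N−1} (∂_θ π^θ_k(A_k|S_k,A_{k−1}) / π^θ_k(A_k|S_k,A_{k−1})) · ( V^θ_k(S_k,A_k) − c_k(S_k,A_{k−1},A_k) − J^θ_k(S_k,A_{k−1}) ) ], i.e. the gradient of the expected reward is the expected sum over decision times of the score ∂_θ log π^θ_k of the sampled action multiplied by the post-action value minus the switching cost minus the pre-action value. -/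
open Finset

noncomputable section

/-- `stateAt s₀ ω k` is the state `S_k` along a trajectory `ω = (A_0,S_1,…,A_{N-1},S_N)`:
`stateAt s₀ ω 0 = s₀` and `stateAt s₀ ω (k+1) = (ω k).2 = S_{k+1}`. -/
def stateAt {S A : Type*} {N : ℕ} (s₀ : S) (ω : Fin N → A × S) : ℕ → S
  | 0 => s₀
  | k + 1 => if h : k < N then (ω ⟨k, h⟩).2 else s₀

/-- `actAt a₀ ω k` is the action `A_{k-1}` along a trajectory:
`actAt a₀ ω 0 = a₀` (i.e. `A_{-1} = a₀`) and `actAt a₀ ω (k+1) = (ω k).1 = A_k`. -/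
def actAt {S A : Type*} {N : ℕ} (a₀ : A) (ω : Fin N → A × S) : ℕ → A
  | 0 => a₀
  | k + 1 => if h : k < N then (ω ⟨k, h⟩).1 else a₀

/-- The trajectory weight
`W^θ(ω) = ∏_{k=0}^{N-1} π^θ_k(A_k | S_k, A_{k-1}) · p_k(S_k, A_k, S_{k+1})`,
where `π k θ s a a'` denotes `π^θ_k(a' | s, a)` and `p k s a s'` denotes `p_k(s,a,s')`. -/
def weight {S A : Type*} (N : ℕ) (p : ℕ → S → A → S → ℝ)
    (π : ℕ → ℝ → S → A → A → ℝ) (θ : ℝ) (s₀ : S) (a₀ : A) (ω : Fin N → A × S) : ℝ :=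
  ∏ k ∈ Finset.range N,
    π k θ (stateAt s₀ ω k) (actAt a₀ ω k) (actAt a₀ ω (k + 1)) *
      p k (stateAt s₀ ω k) (actAt a₀ ω (k + 1)) (stateAt s₀ ω (k + 1))

/-- Auxiliary value function defined by backward recursion on the number of remaining
steps: `Jaux N p π f c g θ m = J^θ_{N-m}`.  In particular `Jaux … 0 = J^θ_N = g` and
`J^θ_k(s,a) = ∑_{a'} π^θ_k(a'|s,a) · (V^θ_k(s,a') − c_k(s,a,a'))` with
`V^θ_k(s,a') = f_k(s,a') + ∑_{s'} p_k(s,a',s') J^θ_{k+1}(s',a')`. -/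
def Jaux {S A : Type*} [Fintype S] [Fintype A] (N : ℕ) (p : ℕ → S → A → S → ℝ)
    (π : ℕ → ℝ → S → A → A → ℝ) (f : ℕ → S → A → ℝ) (c : ℕ → S → A → A → ℝ)
    (g : S → A → ℝ) (θ : ℝ) : ℕ → S → A → ℝ
  | 0 => g
  | m + 1 => fun s a =>
      ∑ a' : A, π (N - (m + 1)) θ s a a' *
        ((f (N - (m + 1)) s a' +
            ∑ s' : S, p (N - (m + 1)) s a' s' * Jaux N p π f c g θ m s' a') -
          c (N - (m + 1)) s a a')

/-- The pre-action value function `J^θ_k`. -/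
def Jval {S A : Type*} [Fintype S] [Fintype A] (N : ℕ) (p : ℕ → S → A → S → ℝ)
    (π : ℕ → ℝ → S → A → A → ℝ) (f : ℕ → S → A → ℝ) (c : ℕ → S → A → A → ℝ)
    (g : S → A → ℝ) (θ : ℝ) (k : ℕ) : S → A → ℝ :=
  Jaux N p π f c g θ (N - k)

/-- The post-action value function
`V^θ_k(s,a') = f_k(s,a') + ∑_{s'} p_k(s,a',s') J^θ_{k+1}(s',a')`. -/
def Vval {S A : Type*} [Fintype S] [Fintype A] (N : ℕ) (p : ℕ → S → A → S → ℝ)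
    (π : ℕ → ℝ → S → A → A → ℝ) (f : ℕ → S → A → ℝ) (c : ℕ → S → A → A → ℝ)
    (g : S → A → ℝ) (θ : ℝ) (k : ℕ) (s : S) (a' : A) : ℝ :=
  f k s a' + ∑ s' : S, p k s a' s' * Jval N p π f c g θ (k + 1) s' a'

/-- The total return
`G(ω) = ∑_{k=0}^{N-1} [f_k(S_k,A_k) − c_k(S_k,A_{k-1},A_k)] + g(S_N,A_{N-1})`. -/
def totalReturn {S A : Type*} (N : ℕ) (f : ℕ → S → A → ℝ) (c : ℕ → S → A → A → ℝ)
    (g : S → A → ℝ) (s₀ : S) (a₀ : A) (ω : Fin N → A × S) : ℝ :=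
  (∑ k ∈ Finset.range N,
      (f k (stateAt s₀ ω k) (actAt a₀ ω (k + 1)) -
        c k (stateAt s₀ ω k) (actAt a₀ ω k) (actAt a₀ ω (k + 1)))) +
    g (stateAt s₀ ω N) (actAt a₀ ω N)


lemma stateAt_cons_succ {S A : Type*} {m : ℕ} (s : S) (y : A × S) (ω : Fin m → A × S)
    {j : ℕ} (hj : j ≤ m) :
    stateAt (N := m + 1) s (Fin.cons y ω) (j + 1) = stateAt y.2 ω j := by
  cases j with
  | zero =>
      show (if h : 0 < m + 1 then ((Fin.cons y ω : Fin (m+1) → A × S) ⟨0, h⟩).2 else s) = y.2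
      rw [dif_pos (Nat.succ_pos m)]; rfl
  | succ i =>
      have h1 : i + 1 < m + 1 := by omega
      have h2 : i < m := by omega
      show (if h : i + 1 < m + 1 then ((Fin.cons y ω : Fin (m+1) → A × S) ⟨i + 1, h⟩).2 else s)
          = (if h : i < m then (ω ⟨i, h⟩).2 else y.2)
      rw [dif_pos h1, dif_pos h2]; rfl

lemma actAt_cons_succ {S A : Type*} {m : ℕ} (a : A) (y : A × S) (ω : Fin m → A × S)
    {j : ℕ} (hj : j ≤ m) :
    actAt (N := m + 1) a (Fin.cons y ω) (j + 1) = actAt y.1 ω j := by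
  cases j with
  | zero =>
      show (if h : 0 < m + 1 then ((Fin.cons y ω : Fin (m+1) → A × S) ⟨0, h⟩).1 else a) = y.1
      rw [dif_pos (Nat.succ_pos m)]; rfl
  | succ i =>
      have h1 : i + 1 < m + 1 := by omega
      have h2 : i < m := by omega
      show (if h : i + 1 < m + 1 then ((Fin.cons y ω : Fin (m+1) → A × S) ⟨i + 1, h⟩).1 else a)
          = (if h : i < m then (ω ⟨i, h⟩).1 else y.1)
      rw [dif_pos h1, dif_pos h2]; rfl

def Jgen {S A : Type*} [Fintype S] [Fintype A] (p : ℕ → S → A → S → ℝ)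
    (π : ℕ → ℝ → S → A → A → ℝ) (f : ℕ → S → A → ℝ) (c : ℕ → S → A → A → ℝ)
    (g : S → A → ℝ) (θ : ℝ) : ℕ → ℕ → S → A → ℝ
  | 0, _ => g
  | m + 1, t => fun s a =>
      ∑ a' : A, π t θ s a a' *
        ((f t s a' + ∑ s' : S, p t s a' s' * Jgen p π f c g θ m (t + 1) s' a') - c t s a a')

def Wgen {S A : Type*} (m t : ℕ) (p : ℕ → S → A → S → ℝ)
    (π : ℕ → ℝ → S → A → A → ℝ) (θ : ℝ) (s₀ : S) (a₀ : A) (ω : Fin m → A × S) : ℝ :=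
  ∏ j ∈ Finset.range m,
    π (t + j) θ (stateAt s₀ ω j) (actAt a₀ ω j) (actAt a₀ ω (j + 1)) *
      p (t + j) (stateAt s₀ ω j) (actAt a₀ ω (j + 1)) (stateAt s₀ ω (j + 1))

def Tm {S A : Type*} [Fintype S] [Fintype A] (p : ℕ → S → A → S → ℝ)
    (π : ℕ → ℝ → S → A → A → ℝ) (f : ℕ → S → A → ℝ) (c : ℕ → S → A → A → ℝ)
    (g : S → A → ℝ) (m t : ℕ) (θ : ℝ) (s : S) (a : A) (ω : Fin m → A × S) (j : ℕ) : ℝ :=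
  (deriv (fun θ' => π (t + j) θ' (stateAt s ω j) (actAt a ω j) (actAt a ω (j + 1))) θ /
      π (t + j) θ (stateAt s ω j) (actAt a ω j) (actAt a ω (j + 1))) *
    ((f (t + j) (stateAt s ω j) (actAt a ω (j + 1)) +
        ∑ s' : S, p (t + j) (stateAt s ω j) (actAt a ω (j + 1)) s' *
          Jgen p π f c g θ (m - (j + 1)) (t + j + 1) s' (actAt a ω (j + 1))) -
      c (t + j) (stateAt s ω j) (actAt a ω j) (actAt a ω (j + 1)) -
      Jgen p π f c g θ (m - j) (t + j) (stateAt s ω j) (actAt a ω j))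

def PG {S A : Type*} [Fintype S] [Fintype A] (p : ℕ → S → A → S → ℝ)
    (π : ℕ → ℝ → S → A → A → ℝ) (f : ℕ → S → A → ℝ) (c : ℕ → S → A → A → ℝ)
    (g : S → A → ℝ) (m t : ℕ) (θ : ℝ) (s : S) (a : A) : ℝ :=
  ∑ ω : Fin m → A × S, Wgen m t p π θ s a ω *
    ∑ j ∈ Finset.range m, Tm p π f c g m t θ s a ω j

lemma sum_cons {S A : Type*} [Fintype S] [Fintype A] {m : ℕ} (F : (Fin (m + 1) → A × S) → ℝ) :
    ∑ ω : Fin (m + 1) → A × S, F ω = ∑ y : A × S, ∑ ω' : Fin m → A × S, F (Fin.cons y ω') := by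
  rw [← Equiv.sum_comp (Fin.consEquiv (fun _ : Fin (m + 1) => A × S)) F, Fintype.sum_prod_type]
  rfl

lemma Wgen_cons {S A : Type*} (m t : ℕ) (p : ℕ → S → A → S → ℝ)
    (π : ℕ → ℝ → S → A → A → ℝ) (θ : ℝ) (s : S) (a : A) (y : A × S) (ω : Fin m → A × S) :
    Wgen (m + 1) t p π θ s a (Fin.cons y ω) =
      π t θ s a y.1 * p t s y.1 y.2 * Wgen m (t + 1) p π θ y.2 y.1 ω := by
  unfold Wgen
  rw [Finset.prod_range_succ']
  have h0 : π (t + 0) θ (stateAt s (Fin.cons y ω) 0) (actAt a (Fin.cons y ω) 0)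
        (actAt a (Fin.cons y ω) (0 + 1)) *
      p (t + 0) (stateAt s (Fin.cons y ω) 0) (actAt a (Fin.cons y ω) (0 + 1))
        (stateAt s (Fin.cons y ω) (0 + 1)) = π t θ s a y.1 * p t s y.1 y.2 := by
    rw [actAt_cons_succ a y ω (Nat.zero_le m), stateAt_cons_succ s y ω (Nat.zero_le m)]
    rfl
  rw [h0, mul_comm]
  congr 1
  apply Finset.prod_congr rfl
  intro j hj
  rw [Finset.mem_range] at hj
  rw [stateAt_cons_succ s y ω (le_of_lt hj), actAt_cons_succ a y ω (le_of_lt hj),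
      actAt_cons_succ a y ω (Nat.succ_le_of_lt hj),
      stateAt_cons_succ s y ω (Nat.succ_le_of_lt hj),
      show t + (j + 1) = t + 1 + j by omega]

lemma Wgen_sum_one {S A : Type*} [Fintype S] [Fintype A]
    (p : ℕ → S → A → S → ℝ) (π : ℕ → ℝ → S → A → A → ℝ) :
    ∀ m t : ℕ,
      (∀ k, t ≤ k → k < t + m → ∀ s a, ∑ s' : S, p k s a s' = 1) →
      (∀ k, t ≤ k → k < t + m → ∀ (θ : ℝ) (s : S) (a : A), ∑ a' : A, π k θ s a a' = 1) →
      ∀ (θ : ℝ) (s : S) (a : A), ∑ ω : Fin m → A × S, Wgen m t p π θ s a ω = 1 := by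
  intro m
  induction m with
  | zero => intro t _ _ θ s a; simp [Wgen]
  | succ m ih =>
      intro t hp hπ θ s a
      rw [sum_cons (fun ω => Wgen (m + 1) t p π θ s a ω)]
      have h1 : ∀ y : A × S, ∑ ω' : Fin m → A × S, Wgen (m + 1) t p π θ s a (Fin.cons y ω') =
          π t θ s a y.1 * p t s y.1 y.2 := by
        intro y
        rw [Finset.sum_congr rfl (fun ω' _ => Wgen_cons m t p π θ s a y ω'), ← Finset.mul_sum,
          ih (t + 1) (fun k hk1 hk2 => hp k (by omega) (by omega))
            (fun k hk1 hk2 => hπ k (by omega) (by omega)) θ y.2 y.1, mul_one]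
      rw [Finset.sum_congr rfl (fun y _ => h1 y), Fintype.sum_prod_type]
      have h2 : ∀ a' : A, ∑ s' : S, π t θ s a a' * p t s a' s' = π t θ s a a' := by
        intro a'
        rw [← Finset.mul_sum, hp t le_rfl (by omega) s a', mul_one]
      rw [Finset.sum_congr rfl (fun a' _ => h2 a'), hπ t le_rfl (by omega) θ s a]

lemma sum_deriv_zero {A : Type*} [Fintype A] (q : ℝ → A → ℝ)
    (hdiff : ∀ a, Differentiable ℝ fun θ => q θ a)
    (hsum : ∀ θ, ∑ a : A, q θ a = 1) (θ : ℝ) :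
    ∑ a : A, deriv (fun θ' => q θ' a) θ = 0 := by
  have h1 : HasDerivAt (fun θ' => ∑ a : A, q θ' a)
      (∑ a : A, deriv (fun θ' => q θ' a) θ) θ :=
    HasDerivAt.fun_sum fun a _ => (hdiff a θ).hasDerivAt
  have h2 : (fun θ' => ∑ a : A, q θ' a) = fun _ => (1 : ℝ) := funext hsum
  rw [h2] at h1
  exact h1.unique (hasDerivAt_const θ 1)

lemma Tm_cons_zero {S A : Type*} [Fintype S] [Fintype A] (p : ℕ → S → A → S → ℝ)
    (π : ℕ → ℝ → S → A → A → ℝ) (f : ℕ → S → A → ℝ) (c : ℕ → S → A → A → ℝ)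
    (g : S → A → ℝ) (m t : ℕ) (θ : ℝ) (s : S) (a : A) (y : A × S) (ω : Fin m → A × S) :
    Tm p π f c g (m + 1) t θ s a (Fin.cons y ω) 0 =
      (deriv (fun θ' => π t θ' s a y.1) θ / π t θ s a y.1) *
        ((f t s y.1 + ∑ s' : S, p t s y.1 s' * Jgen p π f c g θ m (t + 1) s' y.1) -
          c t s a y.1 - Jgen p π f c g θ (m + 1) t s a) := by
  unfold Tm
  rw [actAt_cons_succ a y ω (Nat.zero_le m)]
  rfl

lemma Tm_cons_succ {S A : Type*} [Fintype S] [Fintype A] (p : ℕ → S → A → S → ℝ)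
    (π : ℕ → ℝ → S → A → A → ℝ) (f : ℕ → S → A → ℝ) (c : ℕ → S → A → A → ℝ)
    (g : S → A → ℝ) (m t : ℕ) (θ : ℝ) (s : S) (a : A) (y : A × S) (ω : Fin m → A × S)
    {j : ℕ} (hj : j < m) :
    Tm p π f c g (m + 1) t θ s a (Fin.cons y ω) (j + 1) =
      Tm p π f c g m (t + 1) θ y.2 y.1 ω j := by
  unfold Tm
  rw [stateAt_cons_succ s y ω (le_of_lt hj), actAt_cons_succ a y ω (le_of_lt hj),
      actAt_cons_succ a y ω (Nat.succ_le_of_lt hj),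
      show t + (j + 1) = t + 1 + j by omega,
      show m + 1 - (j + 1 + 1) = m - (j + 1) by omega,
      show m + 1 - (j + 1) = m - j by omega]

lemma main_ind {S A : Type*} [Fintype S] [Fintype A]
    (p : ℕ → S → A → S → ℝ) (π : ℕ → ℝ → S → A → A → ℝ)
    (f : ℕ → S → A → ℝ) (c : ℕ → S → A → A → ℝ) (g : S → A → ℝ) :
    ∀ m t : ℕ,
      (∀ k, t ≤ k → k < t + m → ∀ s a, ∑ s' : S, p k s a s' = 1) →
      (∀ k, t ≤ k → k < t + m → ∀ (θ : ℝ) (s : S) (a a' : A), 0 < π k θ s a a') →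
      (∀ k, t ≤ k → k < t + m → ∀ (θ : ℝ) (s : S) (a : A), ∑ a' : A, π k θ s a a' = 1) →
      (∀ k, t ≤ k → k < t + m → ∀ (s : S) (a a' : A), Differentiable ℝ fun θ => π k θ s a a') →
      ∀ (θ : ℝ) (s : S) (a : A),
        HasDerivAt (fun θ' => Jgen p π f c g θ' m t s a) (PG p π f c g m t θ s a) θ := by
  intro m
  induction m with
  | zero =>
      intro t _ _ _ _ θ s a
      have h0 : PG p π f c g 0 t θ s a = 0 := by simp [PG]
      rw [h0]
      exact hasDerivAt_const θ (g s a)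
  | succ m ih =>
      intro t hp hπpos hπsum hπdiff θ s a
      have htm : t < t + (m + 1) := by omega
      have ih' : ∀ (s' : S) (a' : A),
          HasDerivAt (fun θ' => Jgen p π f c g θ' m (t + 1) s' a')
            (PG p π f c g m (t + 1) θ s' a') θ :=
        fun s' a' => ih (t + 1) (fun k hk1 hk2 => hp k (by omega) (by omega))
          (fun k hk1 hk2 => hπpos k (by omega) (by omega))
          (fun k hk1 hk2 => hπsum k (by omega) (by omega))
          (fun k hk1 hk2 => hπdiff k (by omega) (by omega)) θ s' a'
      have hπd : ∀ a' : A, HasDerivAt (fun θ' => π t θ' s a a')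
          (deriv (fun θ' => π t θ' s a a') θ) θ :=
        fun a' => (hπdiff t le_rfl htm s a a' θ).hasDerivAt
      have hVd : ∀ a' : A,
          HasDerivAt (fun θ' => (f t s a' +
              ∑ s' : S, p t s a' s' * Jgen p π f c g θ' m (t + 1) s' a') - c t s a a')
            (∑ s' : S, p t s a' s' * PG p π f c g m (t + 1) θ s' a') θ := by
        intro a'
        have h1 : HasDerivAt
            (fun θ' => ∑ s' : S, p t s a' s' * Jgen p π f c g θ' m (t + 1) s' a')
            (∑ s' : S, p t s a' s' * PG p π f c g m (t + 1) θ s' a') θ :=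
          HasDerivAt.fun_sum fun s' _ => (ih' s' a').const_mul (p t s a' s')
        exact (h1.const_add (f t s a')).sub_const (c t s a a')
      have hD : HasDerivAt (fun θ' => Jgen p π f c g θ' (m + 1) t s a)
          (∑ a' : A, (deriv (fun θ' => π t θ' s a a') θ *
              ((f t s a' + ∑ s' : S, p t s a' s' * Jgen p π f c g θ m (t + 1) s' a') -
                c t s a a') +
              π t θ s a a' * ∑ s' : S, p t s a' s' * PG p π f c g m (t + 1) θ s' a')) θ := by
        exact HasDerivAt.fun_sum fun a' _ => (hπd a').mul (hVd a')
      suffices hkey : PG p π f c g (m + 1) t θ s a =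
          ∑ a' : A, (deriv (fun θ' => π t θ' s a a') θ *
              ((f t s a' + ∑ s' : S, p t s a' s' * Jgen p π f c g θ m (t + 1) s' a') -
                c t s a a') +
              π t θ s a a' * ∑ s' : S, p t s a' s' * PG p π f c g m (t + 1) θ s' a') by
        rw [hkey]; exact hD
      set J : ℝ := Jgen p π f c g θ (m + 1) t s a with hJ
      have hWone : ∀ (s' : S) (a' : A),
          ∑ ω' : Fin m → A × S, Wgen m (t + 1) p π θ s' a' ω' = 1 :=
        fun s' a' => Wgen_sum_one p π m (t + 1)
          (fun k hk1 hk2 => hp k (by omega) (by omega))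
          (fun k hk1 hk2 => hπsum k (by omega) (by omega)) θ s' a'
      have hπne : ∀ a' : A, π t θ s a a' ≠ 0 :=
        fun a' => ne_of_gt (hπpos t le_rfl htm θ s a a')
      have hderivsum : ∑ a' : A, deriv (fun θ' => π t θ' s a a') θ = 0 :=
        sum_deriv_zero (fun θ' a' => π t θ' s a a')
          (fun a' => hπdiff t le_rfl htm s a a') (fun θ' => hπsum t le_rfl htm θ' s a) θ
      unfold PG
      rw [sum_cons (fun ω => Wgen (m + 1) t p π θ s a ω *
        ∑ j ∈ Finset.range (m + 1), Tm p π f c g (m + 1) t θ s a ω j)]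
      have hinner : ∀ y : A × S,
          ∑ ω' : Fin m → A × S, Wgen (m + 1) t p π θ s a (Fin.cons y ω') *
            ∑ j ∈ Finset.range (m + 1), Tm p π f c g (m + 1) t θ s a (Fin.cons y ω') j =
          π t θ s a y.1 * p t s y.1 y.2 *
            ((deriv (fun θ' => π t θ' s a y.1) θ / π t θ s a y.1) *
              ((f t s y.1 + ∑ s' : S, p t s y.1 s' * Jgen p π f c g θ m (t + 1) s' y.1) -
                c t s a y.1 - J) +
              PG p π f c g m (t + 1) θ y.2 y.1) := by
        intro y
        have hsum_split : ∀ ω' : Fin m → A × S,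
            ∑ j ∈ Finset.range (m + 1), Tm p π f c g (m + 1) t θ s a (Fin.cons y ω') j =
            (deriv (fun θ' => π t θ' s a y.1) θ / π t θ s a y.1) *
              ((f t s y.1 + ∑ s' : S, p t s y.1 s' * Jgen p π f c g θ m (t + 1) s' y.1) -
                c t s a y.1 - J) +
              ∑ j ∈ Finset.range m, Tm p π f c g m (t + 1) θ y.2 y.1 ω' j := by
          intro ω'
          rw [Finset.sum_range_succ', Tm_cons_zero, add_comm]
          congr 1
          exact Finset.sum_congr rfl fun j hj =>
            Tm_cons_succ p π f c g m t θ s a y ω' (Finset.mem_range.mp hj)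
        calc ∑ ω' : Fin m → A × S, Wgen (m + 1) t p π θ s a (Fin.cons y ω') *
              ∑ j ∈ Finset.range (m + 1), Tm p π f c g (m + 1) t θ s a (Fin.cons y ω') j
            = ∑ ω' : Fin m → A × S, π t θ s a y.1 * p t s y.1 y.2 *
                (Wgen m (t + 1) p π θ y.2 y.1 ω' *
                  ((deriv (fun θ' => π t θ' s a y.1) θ / π t θ s a y.1) *
                    ((f t s y.1 + ∑ s' : S, p t s y.1 s' *
                        Jgen p π f c g θ m (t + 1) s' y.1) - c t s a y.1 - J)) +
                 Wgen m (t + 1) p π θ y.2 y.1 ω' *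
                    ∑ j ∈ Finset.range m, Tm p π f c g m (t + 1) θ y.2 y.1 ω' j) := by
              refine Finset.sum_congr rfl fun ω' _ => ?_
              rw [Wgen_cons, hsum_split ω']
              ring
          _ = π t θ s a y.1 * p t s y.1 y.2 *
                ((∑ ω' : Fin m → A × S, Wgen m (t + 1) p π θ y.2 y.1 ω') *
                  ((deriv (fun θ' => π t θ' s a y.1) θ / π t θ s a y.1) *
                    ((f t s y.1 + ∑ s' : S, p t s y.1 s' *
                        Jgen p π f c g θ m (t + 1) s' y.1) - c t s a y.1 - J)) +
                 PG p π f c g m (t + 1) θ y.2 y.1) := by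
              rw [← Finset.mul_sum]
              congr 1
              rw [Finset.sum_add_distrib, ← Finset.sum_mul]
              rfl
          _ = _ := by rw [hWone y.2 y.1, one_mul]
      rw [Finset.sum_congr rfl fun y _ => hinner y, Fintype.sum_prod_type]
      have hA : ∀ a' : A,
          ∑ s' : S, π t θ s a a' * p t s a' s' *
            ((deriv (fun θ' => π t θ' s a a') θ / π t θ s a a') *
              ((f t s a' + ∑ s'' : S, p t s a' s'' * Jgen p π f c g θ m (t + 1) s'' a') -
                c t s a a' - J) +
              PG p π f c g m (t + 1) θ s' a') =
          (deriv (fun θ' => π t θ' s a a') θ *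
              ((f t s a' + ∑ s' : S, p t s a' s' * Jgen p π f c g θ m (t + 1) s' a') -
                c t s a a') +
            π t θ s a a' * ∑ s' : S, p t s a' s' * PG p π f c g m (t + 1) θ s' a') -
            deriv (fun θ' => π t θ' s a a') θ * J := by
        intro a'
        have hterm : ∀ s' : S,
            π t θ s a a' * p t s a' s' *
              ((deriv (fun θ' => π t θ' s a a') θ / π t θ s a a') *
                ((f t s a' + ∑ s'' : S, p t s a' s'' * Jgen p π f c g θ m (t + 1) s'' a') -
                  c t s a a' - J) +
                PG p π f c g m (t + 1) θ s' a') =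
            p t s a' s' * (deriv (fun θ' => π t θ' s a a') θ *
                ((f t s a' + ∑ s'' : S, p t s a' s'' * Jgen p π f c g θ m (t + 1) s'' a') -
                  c t s a a' - J)) +
              π t θ s a a' * (p t s a' s' * PG p π f c g m (t + 1) θ s' a') := by
          intro s'
          field_simp [hπne a']
        rw [Finset.sum_congr rfl fun s' _ => hterm s', Finset.sum_add_distrib, ← Finset.sum_mul,
          hp t le_rfl htm s a', one_mul, ← Finset.mul_sum]
        ring
      rw [Finset.sum_congr rfl fun a' _ => hA a', Finset.sum_sub_distrib, ← Finset.sum_mul,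
        hderivsum, zero_mul, sub_zero]
      rfl

lemma Jaux_eq_Jgen {S A : Type*} [Fintype S] [Fintype A] (N : ℕ) (p : ℕ → S → A → S → ℝ)
    (π : ℕ → ℝ → S → A → A → ℝ) (f : ℕ → S → A → ℝ) (c : ℕ → S → A → A → ℝ)
    (g : S → A → ℝ) (θ : ℝ) :
    ∀ m, m ≤ N → Jaux N p π f c g θ m = Jgen p π f c g θ m (N - m) := by
  intro m
  induction m with
  | zero => intro _; rfl
  | succ m ihm =>
      intro hm
      show (fun s a => ∑ a' : A, π (N - (m + 1)) θ s a a' *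
          ((f (N - (m + 1)) s a' +
              ∑ s' : S, p (N - (m + 1)) s a' s' * Jaux N p π f c g θ m s' a') -
            c (N - (m + 1)) s a a')) = _
      rw [ihm (by omega)]
      show _ = fun s a => ∑ a' : A, π (N - (m + 1)) θ s a a' *
          ((f (N - (m + 1)) s a' +
              ∑ s' : S, p (N - (m + 1)) s a' s' *
                Jgen p π f c g θ m (N - (m + 1) + 1) s' a') -
            c (N - (m + 1)) s a a')
      rw [show N - (m + 1) + 1 = N - m by omega]

lemma Jval_eq_Jgen {S A : Type*} [Fintype S] [Fintype A] (N : ℕ) (p : ℕ → S → A → S → ℝ)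
    (π : ℕ → ℝ → S → A → A → ℝ) (f : ℕ → S → A → ℝ) (c : ℕ → S → A → A → ℝ)
    (g : S → A → ℝ) (θ : ℝ) (k : ℕ) (hk : k ≤ N) :
    Jval N p π f c g θ k = Jgen p π f c g θ (N - k) k := by
  rw [Jval, Jaux_eq_Jgen N p π f c g θ (N - k) (by omega), show N - (N - k) = k by omega]

lemma weight_eq_Wgen {S A : Type*} (N : ℕ) (p : ℕ → S → A → S → ℝ)
    (π : ℕ → ℝ → S → A → A → ℝ) (θ : ℝ) (s₀ : S) (a₀ : A) (ω : Fin N → A × S) :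
    weight N p π θ s₀ a₀ ω = Wgen N 0 p π θ s₀ a₀ ω := by
  unfold weight Wgen
  exact Finset.prod_congr rfl fun k _ => by rw [Nat.zero_add]


/-- **Policy gradient representation (deterministic-grid case).**
The map `θ ↦ J^θ_0(s₀,a₀)` is differentiable on `ℝ` and its derivative at every `θ` equals
`E^θ[ ∑_{k=0}^{N-1} (∂_θ π^θ_k(A_k|S_k,A_{k-1}) / π^θ_k(A_k|S_k,A_{k-1}))
      · (V^θ_k(S_k,A_k) − c_k(S_k,A_{k-1},A_k) − J^θ_k(S_k,A_{k-1})) ]`. -/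
theorem policy_gradient_deterministic_grid
    {S A : Type*} [Fintype S] [Fintype A] [Nonempty S] [Nonempty A]
    (N : ℕ) (hN : 1 ≤ N)
    (p : ℕ → S → A → S → ℝ) (f : ℕ → S → A → ℝ) (c : ℕ → S → A → A → ℝ)
    (g : S → A → ℝ) (π : ℕ → ℝ → S → A → A → ℝ)
    (hp_nonneg : ∀ k < N, ∀ s a s', 0 ≤ p k s a s')
    (hp_sum : ∀ k < N, ∀ s a, ∑ s' : S, p k s a s' = 1)
    (hπ_pos : ∀ k < N, ∀ (θ : ℝ) (s : S) (a a' : A), 0 < π k θ s a a')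
    (hπ_sum : ∀ k < N, ∀ (θ : ℝ) (s : S) (a : A), ∑ a' : A, π k θ s a a' = 1)
    (hπ_diff : ∀ k < N, ∀ (s : S) (a a' : A), Differentiable ℝ (fun θ => π k θ s a a'))
    (s₀ : S) (a₀ : A) :
    ∀ θ : ℝ,
      HasDerivAt (fun θ' => Jval N p π f c g θ' 0 s₀ a₀)
        (∑ ω : Fin N → A × S, weight N p π θ s₀ a₀ ω *
          ∑ k ∈ Finset.range N,
            (deriv (fun θ' => π k θ' (stateAt s₀ ω k) (actAt a₀ ω k) (actAt a₀ ω (k + 1))) θ /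
                π k θ (stateAt s₀ ω k) (actAt a₀ ω k) (actAt a₀ ω (k + 1))) *
              (Vval N p π f c g θ k (stateAt s₀ ω k) (actAt a₀ ω (k + 1)) -
                c k (stateAt s₀ ω k) (actAt a₀ ω k) (actAt a₀ ω (k + 1)) -
                Jval N p π f c g θ k (stateAt s₀ ω k) (actAt a₀ ω k))) θ := by
  intro θ
  have hfun : (fun θ' => Jval N p π f c g θ' 0 s₀ a₀) =
      fun θ' => Jgen p π f c g θ' N 0 s₀ a₀ := by
    funext θ'
    rw [Jval_eq_Jgen N p π f c g θ' 0 (by omega), Nat.sub_zero]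
  have hmain := main_ind p π f c g N 0
    (fun k hk1 hk2 => hp_sum k (by omega))
    (fun k hk1 hk2 => hπ_pos k (by omega))
    (fun k hk1 hk2 => hπ_sum k (by omega))
    (fun k hk1 hk2 => hπ_diff k (by omega)) θ s₀ a₀
  rw [hfun]
  have hsum : (∑ ω : Fin N → A × S, weight N p π θ s₀ a₀ ω *
      ∑ k ∈ Finset.range N,
        (deriv (fun θ' => π k θ' (stateAt s₀ ω k) (actAt a₀ ω k) (actAt a₀ ω (k + 1))) θ /
            π k θ (stateAt s₀ ω k) (actAt a₀ ω k) (actAt a₀ ω (k + 1))) *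
          (Vval N p π f c g θ k (stateAt s₀ ω k) (actAt a₀ ω (k + 1)) -
            c k (stateAt s₀ ω k) (actAt a₀ ω k) (actAt a₀ ω (k + 1)) -
            Jval N p π f c g θ k (stateAt s₀ ω k) (actAt a₀ ω k))) =
      PG p π f c g N 0 θ s₀ a₀ := by
    unfold PG
    refine Finset.sum_congr rfl fun ω _ => ?_
    rw [weight_eq_Wgen]
    congr 1
    refine Finset.sum_congr rfl fun k hk => ?_
    rw [Finset.mem_range] at hk
    unfold Tm
    rw [Nat.zero_add, Vval,
      Jval_eq_Jgen N p π f c g θ (k + 1) (by omega),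
      Jval_eq_Jgen N p π f c g θ k (by omega)]
  rw [hsum]
  exact hmain
end
end

section
/- (Likelihood-ratio / REINFORCE form of the policy gradient in the deterministic-grid case.) The map θ ↦ J^θ_0(s₀,a₀) is differentiable on ℝ, and for every θ ∈ ℝ its derivative equals E^θ[ ( Σ_{k=0}^{N−1} ∂_θ π^θ_k(A_k|S_k,A_{k−1}) / π^θ_k(A_k|S_k,A_{k−1}) ) · G ], where G is the total return of the trajectory. -/
open Finset

noncomputable section

section Helpers
variable {S A : Type*}

lemma stateAt_cons {m : ℕ} (s : S) (x : A × S) (ω : Fin m → A × S) (j : ℕ) (h : j ≤ m) :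
    stateAt s (Fin.cons x ω : Fin (m + 1) → A × S) (j + 1) = stateAt x.2 ω j := by
  cases j with
  | zero => simp [stateAt]
  | succ i =>
    have hi : i < m := h
    simp only [stateAt, dif_pos hi, dif_pos (Nat.succ_lt_succ hi)]
    simp [Fin.cons, Fin.cases_succ']

lemma actAt_cons {m : ℕ} (a : A) (x : A × S) (ω : Fin m → A × S) (j : ℕ) (h : j ≤ m) :
    actAt a (Fin.cons x ω : Fin (m + 1) → A × S) (j + 1) = actAt x.1 ω j := by
  cases j with
  | zero => simp [actAt]
  | succ i =>
    have hi : i < m := h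
    simp only [actAt, dif_pos hi, dif_pos (Nat.succ_lt_succ hi)]
    simp [Fin.cons, Fin.cases_succ']

lemma sum_cons_decomp [Fintype S] [Fintype A] {m : ℕ} (F : (Fin (m + 1) → A × S) → ℝ) :
    ∑ ω : Fin (m + 1) → A × S, F ω =
      ∑ x : A × S, ∑ ω' : Fin m → A × S, F (Fin.cons x ω') := by
  rw [← Equiv.sum_comp (Fin.consEquiv fun _ => A × S) F, Fintype.sum_prod_type]
  rfl

end Helpers

/-- Partial trajectory weight starting at time `t` for `m` steps. -/
def Wm {S A : Type*} (p : ℕ → S → A → S → ℝ) (π : ℕ → ℝ → S → A → A → ℝ)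
    (θ : ℝ) (m t : ℕ) (s : S) (a : A) (ω : Fin m → A × S) : ℝ :=
  ∏ j ∈ Finset.range m,
    π (t + j) θ (stateAt s ω j) (actAt a ω j) (actAt a ω (j + 1)) *
      p (t + j) (stateAt s ω j) (actAt a ω (j + 1)) (stateAt s ω (j + 1))

/-- Partial return starting at time `t` for `m` steps. -/
def Gm {S A : Type*} (f : ℕ → S → A → ℝ) (c : ℕ → S → A → A → ℝ) (g : S → A → ℝ)
    (m t : ℕ) (s : S) (a : A) (ω : Fin m → A × S) : ℝ :=
  (∑ j ∈ Finset.range m,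
      (f (t + j) (stateAt s ω j) (actAt a ω (j + 1)) -
        c (t + j) (stateAt s ω j) (actAt a ω j) (actAt a ω (j + 1)))) +
    g (stateAt s ω m) (actAt a ω m)

section Main
variable {S A : Type*} [Fintype S] [Fintype A]

omit [Fintype S] [Fintype A] in
lemma Wm_cons (p : ℕ → S → A → S → ℝ) (π : ℕ → ℝ → S → A → A → ℝ) (θ : ℝ)
    {m : ℕ} (t : ℕ) (s : S) (a : A) (x : A × S) (ω : Fin m → A × S) :
    Wm p π θ (m + 1) t s a (Fin.cons x ω) =
      (π t θ s a x.1 * p t s x.1 x.2) * Wm p π θ m (t + 1) x.2 x.1 ω := by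
  unfold Wm
  rw [Finset.prod_range_succ']
  have h0 : (π (t + 0) θ (stateAt s (Fin.cons x ω : Fin (m+1) → A × S) 0)
      (actAt a (Fin.cons x ω : Fin (m+1) → A × S) 0)
      (actAt a (Fin.cons x ω : Fin (m+1) → A × S) 1) *
      p (t + 0) (stateAt s (Fin.cons x ω : Fin (m+1) → A × S) 0)
      (actAt a (Fin.cons x ω : Fin (m+1) → A × S) 1)
      (stateAt s (Fin.cons x ω : Fin (m+1) → A × S) 1)) =
      π t θ s a x.1 * p t s x.1 x.2 := by
    rw [actAt_cons a x ω 0 (Nat.zero_le m), stateAt_cons s x ω 0 (Nat.zero_le m)]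
    simp [stateAt, actAt]
  rw [h0, mul_comm]
  congr 1
  refine Finset.prod_congr rfl fun j hj => ?_
  have hj' : j < m := Finset.mem_range.mp hj
  rw [stateAt_cons s x ω j hj'.le, stateAt_cons s x ω (j + 1) hj',
    actAt_cons a x ω j hj'.le, actAt_cons a x ω (j + 1) hj',
    show t + (j + 1) = t + 1 + j by omega]

omit [Fintype S] [Fintype A] in
lemma Gm_cons (f : ℕ → S → A → ℝ) (c : ℕ → S → A → A → ℝ) (g : S → A → ℝ)
    {m : ℕ} (t : ℕ) (s : S) (a : A) (x : A × S) (ω : Fin m → A × S) :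
    Gm f c g (m + 1) t s a (Fin.cons x ω) =
      (f t s x.1 - c t s a x.1) + Gm f c g m (t + 1) x.2 x.1 ω := by
  unfold Gm
  rw [Finset.sum_range_succ']
  have h0 : (f (t + 0) (stateAt s (Fin.cons x ω : Fin (m+1) → A × S) 0)
      (actAt a (Fin.cons x ω : Fin (m+1) → A × S) 1) -
      c (t + 0) (stateAt s (Fin.cons x ω : Fin (m+1) → A × S) 0)
      (actAt a (Fin.cons x ω : Fin (m+1) → A × S) 0)
      (actAt a (Fin.cons x ω : Fin (m+1) → A × S) 1)) =
      f t s x.1 - c t s a x.1 := by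
    rw [actAt_cons a x ω 0 (Nat.zero_le m)]
    simp [stateAt, actAt]
  rw [h0, stateAt_cons s x ω m le_rfl, actAt_cons a x ω m le_rfl]
  have hsum : ∀ j ∈ Finset.range m,
      (f (t + (j + 1)) (stateAt s (Fin.cons x ω : Fin (m+1) → A × S) (j + 1))
        (actAt a (Fin.cons x ω : Fin (m+1) → A × S) (j + 1 + 1)) -
      c (t + (j + 1)) (stateAt s (Fin.cons x ω : Fin (m+1) → A × S) (j + 1))
        (actAt a (Fin.cons x ω : Fin (m+1) → A × S) (j + 1))
        (actAt a (Fin.cons x ω : Fin (m+1) → A × S) (j + 1 + 1))) =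
      (f (t + 1 + j) (stateAt x.2 ω j) (actAt x.1 ω (j + 1)) -
        c (t + 1 + j) (stateAt x.2 ω j) (actAt x.1 ω j) (actAt x.1 ω (j + 1))) := by
    intro j hj
    have hj' : j < m := Finset.mem_range.mp hj
    rw [stateAt_cons s x ω j hj'.le, actAt_cons a x ω j hj'.le,
      actAt_cons a x ω (j + 1) hj', show t + (j + 1) = t + 1 + j by omega]
  rw [Finset.sum_congr rfl hsum]
  ring

lemma Wm_sum_one (p : ℕ → S → A → S → ℝ) (π : ℕ → ℝ → S → A → A → ℝ) (θ : ℝ) :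
    ∀ (m t : ℕ), (∀ j < m, ∀ s a, ∑ s' : S, p (t + j) s a s' = 1) →
    (∀ j < m, ∀ s a, ∑ a' : A, π (t + j) θ s a a' = 1) →
    ∀ s a, ∑ ω : Fin m → A × S, Wm p π θ m t s a ω = 1 := by
  intro m
  induction m with
  | zero => intro t _ _ s a; simp [Wm]
  | succ m ih =>
    intro t hp hπ s a
    rw [sum_cons_decomp]
    have hstep : ∀ x : A × S, ∑ ω' : Fin m → A × S,
        Wm p π θ (m + 1) t s a (Fin.cons x ω') = π t θ s a x.1 * p t s x.1 x.2 := by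
      intro x
      have := ih (t + 1) (fun j hj => by
          have := hp (j + 1) (by omega); rwa [show t + (j + 1) = t + 1 + j by omega] at this)
        (fun j hj => by
          have := hπ (j + 1) (by omega); rwa [show t + (j + 1) = t + 1 + j by omega] at this)
        x.2 x.1
      simp only [Wm_cons]
      rw [← Finset.mul_sum, this, mul_one]
    rw [Finset.sum_congr rfl fun x _ => hstep x, Fintype.sum_prod_type]
    have hinner : ∀ a' : A, ∑ s' : S, π t θ s a a' * p t s a' s' = π t θ s a a' := by
      intro a'
      have h1 : ∑ s' : S, p t s a' s' = 1 := hp 0 (Nat.succ_pos m) s a'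
      rw [← Finset.mul_sum, h1, mul_one]
    rw [Finset.sum_congr rfl fun a' _ => hinner a']
    exact hπ 0 (Nat.succ_pos m) s a

lemma Jaux_eq (N : ℕ) (p : ℕ → S → A → S → ℝ) (π : ℕ → ℝ → S → A → A → ℝ)
    (f : ℕ → S → A → ℝ) (c : ℕ → S → A → A → ℝ) (g : S → A → ℝ) (θ : ℝ)
    (hp_sum : ∀ k < N, ∀ s a, ∑ s' : S, p k s a s' = 1)
    (hπ_sum : ∀ k < N, ∀ s a, ∑ a' : A, π k θ s a a' = 1) :
    ∀ m, m ≤ N → ∀ s a, Jaux N p π f c g θ m s a =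
      ∑ ω : Fin m → A × S, Wm p π θ m (N - m) s a ω * Gm f c g m (N - m) s a ω := by
  intro m
  induction m with
  | zero => intro _ s a; simp [Jaux, Wm, Gm, stateAt, actAt]
  | succ m ih =>
    intro hm s a
    set t := N - (m + 1) with ht
    have ht1 : N - m = t + 1 := by omega
    rw [sum_cons_decomp]
    have inner : ∀ x : A × S,
        (∑ ω' : Fin m → A × S,
          Wm p π θ (m + 1) t s a (Fin.cons x ω') *
            Gm f c g (m + 1) t s a (Fin.cons x ω')) =
        π t θ s a x.1 * p t s x.1 x.2 *
          ((f t s x.1 - c t s a x.1) + Jaux N p π f c g θ m x.2 x.1) := by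
      intro x
      have hsum1 : ∑ ω' : Fin m → A × S, Wm p π θ m (t + 1) x.2 x.1 ω' = 1 :=
        Wm_sum_one p π θ m (t + 1) (fun j hj s a => hp_sum (t + 1 + j) (by omega) s a)
          (fun j hj s a => hπ_sum (t + 1 + j) (by omega) s a) x.2 x.1
      have hJ : Jaux N p π f c g θ m x.2 x.1 =
          ∑ ω' : Fin m → A × S,
            Wm p π θ m (N - m) x.2 x.1 ω' * Gm f c g m (N - m) x.2 x.1 ω' :=
        ih (by omega) x.2 x.1
      rw [ht1] at hJ
      simp only [Wm_cons, Gm_cons]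
      have hexp : ∀ ω' : Fin m → A × S,
          (π t θ s a x.1 * p t s x.1 x.2 * Wm p π θ m (t + 1) x.2 x.1 ω') *
            ((f t s x.1 - c t s a x.1) + Gm f c g m (t + 1) x.2 x.1 ω') =
          (π t θ s a x.1 * p t s x.1 x.2 * (f t s x.1 - c t s a x.1)) *
              Wm p π θ m (t + 1) x.2 x.1 ω' +
            (π t θ s a x.1 * p t s x.1 x.2) *
              (Wm p π θ m (t + 1) x.2 x.1 ω' * Gm f c g m (t + 1) x.2 x.1 ω') :=
        fun ω' => by ring
      rw [Finset.sum_congr rfl fun ω' _ => hexp ω', Finset.sum_add_distrib,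
        ← Finset.mul_sum, ← Finset.mul_sum, hsum1, ← hJ]
      ring
    rw [Finset.sum_congr rfl fun x _ => inner x, Fintype.sum_prod_type]
    have hJs : Jaux N p π f c g θ (m + 1) s a =
        ∑ a' : A, π (N - (m + 1)) θ s a a' *
          ((f (N - (m + 1)) s a' +
              ∑ s' : S, p (N - (m + 1)) s a' s' * Jaux N p π f c g θ m s' a') -
            c (N - (m + 1)) s a a') := rfl
    rw [hJs, ← ht]
    refine Finset.sum_congr rfl fun a' _ => ?_
    have hps : ∑ s' : S, p t s a' s' = 1 := hp_sum t (by omega) s a'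
    have hrhs : (∑ s' : S, π t θ s a a' * p t s a' s' *
          ((f t s a' - c t s a a') + Jaux N p π f c g θ m s' a'))
        = π t θ s a a' * (f t s a' - c t s a a') * (∑ s' : S, p t s a' s') +
          π t θ s a a' * ∑ s' : S, p t s a' s' * Jaux N p π f c g θ m s' a' := by
      rw [Finset.mul_sum, Finset.mul_sum, ← Finset.sum_add_distrib]
      exact Finset.sum_congr rfl fun s' _ => by ring
    rw [hrhs, hps]
    ring

end Main

/-- **Likelihood-ratio / REINFORCE form of the policy gradient (deterministic-grid case).**
The map `θ ↦ J^θ_0(s₀,a₀)` is differentiable on `ℝ` and its derivative at every `θ` equals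
`E^θ[ ( ∑_{k=0}^{N-1} ∂_θ π^θ_k(A_k|S_k,A_{k-1}) / π^θ_k(A_k|S_k,A_{k-1}) ) · G ]`,
where `G` is the total return of the trajectory. -/
theorem policy_gradient_reinforce_deterministic_grid
    {S A : Type*} [Fintype S] [Fintype A] [Nonempty S] [Nonempty A]
    (N : ℕ) (hN : 1 ≤ N)
    (p : ℕ → S → A → S → ℝ) (f : ℕ → S → A → ℝ) (c : ℕ → S → A → A → ℝ)
    (g : S → A → ℝ) (π : ℕ → ℝ → S → A → A → ℝ)
    (hp_nonneg : ∀ k < N, ∀ s a s', 0 ≤ p k s a s')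
    (hp_sum : ∀ k < N, ∀ s a, ∑ s' : S, p k s a s' = 1)
    (hπ_pos : ∀ k < N, ∀ (θ : ℝ) (s : S) (a a' : A), 0 < π k θ s a a')
    (hπ_sum : ∀ k < N, ∀ (θ : ℝ) (s : S) (a : A), ∑ a' : A, π k θ s a a' = 1)
    (hπ_diff : ∀ k < N, ∀ (s : S) (a a' : A), Differentiable ℝ (fun θ => π k θ s a a'))
    (s₀ : S) (a₀ : A) :
    ∀ θ : ℝ,
      HasDerivAt (fun θ' => Jval N p π f c g θ' 0 s₀ a₀)
        (∑ ω : Fin N → A × S, weight N p π θ s₀ a₀ ω *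
          ((∑ k ∈ Finset.range N,
              deriv (fun θ' => π k θ' (stateAt s₀ ω k) (actAt a₀ ω k) (actAt a₀ ω (k + 1))) θ /
                π k θ (stateAt s₀ ω k) (actAt a₀ ω k) (actAt a₀ ω (k + 1))) *
            totalReturn N f c g s₀ a₀ ω)) θ := by
  intro θ
  have hrep : ∀ θ' : ℝ, Jval N p π f c g θ' 0 s₀ a₀ =
      ∑ ω : Fin N → A × S, weight N p π θ' s₀ a₀ ω * totalReturn N f c g s₀ a₀ ω := by
    intro θ'
    have h := Jaux_eq N p π f c g θ' hp_sum (fun k hk s a => hπ_sum k hk θ' s a) N le_rfl s₀ a₀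
    have h0 : Jval N p π f c g θ' 0 s₀ a₀ = Jaux N p π f c g θ' N s₀ a₀ := rfl
    rw [h0, h]
    refine Finset.sum_congr rfl fun ω _ => ?_
    simp only [Wm, Gm, weight, totalReturn, Nat.sub_self, Nat.zero_add]
  rw [show (fun θ' => Jval N p π f c g θ' 0 s₀ a₀) =
      fun θ' => ∑ ω : Fin N → A × S, weight N p π θ' s₀ a₀ ω * totalReturn N f c g s₀ a₀ ω
    from funext hrep]
  have hW : ∀ ω : Fin N → A × S, HasDerivAt (fun θ' => weight N p π θ' s₀ a₀ ω)
      (weight N p π θ s₀ a₀ ω * ∑ k ∈ Finset.range N,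
        deriv (fun θ' => π k θ' (stateAt s₀ ω k) (actAt a₀ ω k) (actAt a₀ ω (k + 1))) θ /
          π k θ (stateAt s₀ ω k) (actAt a₀ ω k) (actAt a₀ ω (k + 1))) θ := by
    intro ω
    have hd : ∀ k ∈ Finset.range N, HasDerivAt
        (fun θ' => π k θ' (stateAt s₀ ω k) (actAt a₀ ω k) (actAt a₀ ω (k + 1)) *
          p k (stateAt s₀ ω k) (actAt a₀ ω (k + 1)) (stateAt s₀ ω (k + 1)))
        (deriv (fun θ' => π k θ' (stateAt s₀ ω k) (actAt a₀ ω k) (actAt a₀ ω (k + 1))) θ *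
          p k (stateAt s₀ ω k) (actAt a₀ ω (k + 1)) (stateAt s₀ ω (k + 1))) θ := by
      intro k hk
      exact ((hπ_diff k (Finset.mem_range.mp hk) _ _ _).differentiableAt.hasDerivAt).mul_const _
    have h := HasDerivAt.fun_finsetProd hd
    refine h.congr_deriv (Eq.symm ?_)
    rw [weight, Finset.mul_sum]
    refine Finset.sum_congr rfl fun k hk => ?_
    have hk' : k < N := Finset.mem_range.mp hk
    have hπne : π k θ (stateAt s₀ ω k) (actAt a₀ ω k) (actAt a₀ ω (k + 1)) ≠ 0 :=
      (hπ_pos k hk' θ _ _ _).ne'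
    rw [smul_eq_mul, ← Finset.mul_prod_erase _ _ hk]
    field_simp
  have hsum := HasDerivAt.fun_sum (x := θ) (u := (Finset.univ : Finset (Fin N → A × S)))
    (fun ω _ => (hW ω).mul_const (totalReturn N f c g s₀ a₀ ω))
  refine hsum.congr_deriv (Eq.symm ?_)
  exact Finset.sum_congr rfl fun ω _ => by ring
end
end
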